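/- Assume λ_k < α ≤ β. Then for every v ∈ V₂ with v ≠ 0, the function w = M_{α,β}(v) + v is sign-changing: both w⁺ and w⁻ are nonzero in L²(Ω), i.e. the sets {w > 0} and {w < 0} have positive Lebesgue measure in Ω. -/

import Mathlib

open MeasureTheory RealInnerProductSpace Filter Topology

/-- The functional `J_{α,β}(u) = ½(B(u,u) - α∫_Ω (u⁺)² - β∫_Ω (u⁻)²)`, where the Hilbert
space `X₀` carries the Gagliardo-type inner product `B = ⟪·,·⟫` and `T : X₀ → L²(Ω)` is the
embedding into `L²(Ω)`; note `∫_Ω (u⁺)² = ‖(Tu)⁺‖²_{L²}`. -/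
noncomputable def Jfun {Ω : Type*} [MeasurableSpace Ω] {μ : Measure Ω}
    {X₀ : Type*} [NormedAddCommGroup X₀] [InnerProductSpace ℝ X₀]
    (T : X₀ →ₗ[ℝ] Lp ℝ 2 μ) (α β : ℝ) (u : X₀) : ℝ :=
  (⟪u, u⟫ - α * ‖Lp.posPart (T u)‖ ^ 2 - β * ‖Lp.negPart (T u)‖ ^ 2) / 2

section helpers
variable {Y : Type*} [MeasurableSpace Y] {μ : Measure Y}

lemma inner_L2' (f g : Lp ℝ 2 μ) : ⟪f, g⟫ = ∫ x, f x * g x ∂μ := by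
  rw [MeasureTheory.L2.inner_def]
  simp [RCLike.inner_apply]
  exact integral_congr_ae (Filter.Eventually.of_forall fun x => mul_comm _ _)

lemma integrable_mul_L2 (f g : Lp ℝ 2 μ) : Integrable (fun x => f x * g x) μ := by
  have := MeasureTheory.L2.integrable_inner (𝕜 := ℝ) f g
  simpa [RCLike.inner_apply, mul_comm] using this

lemma norm_sq_L2 (f : Lp ℝ 2 μ) : ‖f‖ ^ 2 = ∫ x, f x * f x ∂μ := by
  rw [← real_inner_self_eq_norm_sq, inner_L2']

lemma posPart_negPart_sq (f : Lp ℝ 2 μ) :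
    ‖Lp.posPart f‖ ^ 2 + ‖Lp.negPart f‖ ^ 2 = ‖f‖ ^ 2 := by
  rw [norm_sq_L2, norm_sq_L2, norm_sq_L2,
    ← integral_add (integrable_mul_L2 _ _) (integrable_mul_L2 _ _)]
  refine integral_congr_ae ?_
  filter_upwards [Lp.coeFn_posPart f, Lp.coeFn_negPart f] with x h1 h2
  rw [h1, h2]
  rcases le_total (f x) 0 with h | h
  · rw [max_eq_right h, min_eq_left h]; ring
  · rw [max_eq_left h, min_eq_right h]; ring

lemma negPart_sq_le (f g : Lp ℝ 2 μ) (h : ∀ᵐ x ∂μ, -(g x) ≤ f x) :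
    ‖Lp.negPart f‖ ^ 2 ≤ ‖g‖ ^ 2 := by
  rw [norm_sq_L2, norm_sq_L2]
  refine integral_mono_ae (integrable_mul_L2 _ _) (integrable_mul_L2 _ _) ?_
  filter_upwards [Lp.coeFn_negPart f, h] with x h1 h2
  rw [h1]
  have h0 : 0 ≤ -min (f x) 0 := neg_nonneg.mpr (min_le_right _ _)
  have h3 : -min (f x) 0 ≤ |g x| := by
    rcases le_total (f x) 0 with h4 | h4
    · rw [min_eq_left h4]; linarith [le_abs_self (g x)]
    · rw [min_eq_right h4]; simp [abs_nonneg]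
  calc -min (f x) 0 * -min (f x) 0 ≤ |g x| * |g x| := mul_le_mul h3 h3 h0 (abs_nonneg _)
    _ = g x * g x := abs_mul_abs_self _

lemma posPart_eq_of_nonneg (f : Lp ℝ 2 μ) (h : ∀ᵐ x ∂μ, 0 ≤ f x) : Lp.posPart f = f := by
  apply Lp.ext
  filter_upwards [Lp.coeFn_posPart f, h] with x h1 h2
  rw [h1, max_eq_left h2]

lemma negPart_eq_zero_of_nonneg (f : Lp ℝ 2 μ) (h : ∀ᵐ x ∂μ, 0 ≤ f x) : Lp.negPart f = 0 := by
  apply Lp.ext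
  filter_upwards [Lp.coeFn_negPart f, Lp.coeFn_zero (E := ℝ) (p := 2) (μ := μ), h] with x h1 h2 h3
  rw [h1, h2, min_eq_right h3, neg_zero]; rfl

lemma posPart_eq_zero_of_nonpos (f : Lp ℝ 2 μ) (h : ∀ᵐ x ∂μ, f x ≤ 0) : Lp.posPart f = 0 := by
  apply Lp.ext
  filter_upwards [Lp.coeFn_posPart f, Lp.coeFn_zero (E := ℝ) (p := 2) (μ := μ), h] with x h1 h2 h3
  rw [h1, h2, max_eq_right h3]; rfl

lemma negPart_eq_neg_of_nonpos (f : Lp ℝ 2 μ) (h : ∀ᵐ x ∂μ, f x ≤ 0) : Lp.negPart f = -f := by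
  apply Lp.ext
  filter_upwards [Lp.coeFn_negPart f, Lp.coeFn_neg f, h] with x h1 h2 h3
  rw [h1, h2, min_eq_left h3]; rfl

end helpers

set_option maxHeartbeats 2000000 in
theorem stmt_4
    {n : ℕ} {s : ℝ} (hs0 : 0 < s) (hs1 : s < 1) (hns : 2 * s < (n : ℝ))
    {Ωs : Set (EuclideanSpace ℝ (Fin n))} (hΩb : Bornology.IsBounded Ωs)
    (hΩm : MeasurableSet Ωs)
    {K : EuclideanSpace ℝ (Fin n) → ℝ} (hKpos : ∀ x, x ≠ 0 → 0 < K x)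
    (hK1 : Integrable (fun x => min (‖x‖ ^ 2) 1 * K x))
    (hK2 : ∃ lam > 0, ∀ x, x ≠ 0 → lam * ‖x‖ ^ (-((n : ℝ) + 2 * s)) ≤ K x)
    (hK3 : ∀ x, K (-x) = K x)
    {X₀ : Type*} [NormedAddCommGroup X₀] [InnerProductSpace ℝ X₀] [CompleteSpace X₀]
    (T : X₀ →ₗ[ℝ] Lp ℝ 2 (volume.restrict Ωs)) (hT : Function.Injective T)
    {lk lk1 : ℝ} (hlk0 : 0 < lk) (hlk : lk < lk1)
    (V₁ V₂ : Submodule ℝ X₀) [FiniteDimensional ℝ V₁]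
    (hV₂ : ∀ v : X₀, v ∈ V₂ ↔ ∀ u ∈ V₁, ⟪u, v⟫ = 0 ∧ ⟪T u, T v⟫ = 0)
    (hcompl : IsCompl V₁ V₂)
    (hV₁b : ∀ u ∈ V₁, ⟪u, u⟫ ≤ lk * ‖T u‖ ^ 2)
    (hV₂b : ∀ v ∈ V₂, lk1 * ‖T v‖ ^ 2 ≤ ⟪v, v⟫)
    (lam1 : ℝ) (hlam1 : 0 < lam1) (hlam1k : lam1 ≤ lk) (φ₁ : V₁)
    (hφ₁pos : ∀ᵐ x ∂(volume.restrict Ωs), 0 < (T (φ₁ : X₀)) x)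
    (hφ₁eig : ∀ ψ : X₀, ⟪(φ₁ : X₀), ψ⟫ = lam1 * ⟪T (φ₁ : X₀), T ψ⟫)
    {α β : ℝ} (hA : lk < α) (hAB : α ≤ β)
    (M : V₂ → V₁)
    (hM : ∀ (v : V₂) (u : V₁),
      Jfun T α β ((u : X₀) + (v : X₀)) ≤ Jfun T α β ((M v : X₀) + (v : X₀)))
    :
    ∀ v : V₂, v ≠ 0 →
      0 < (volume.restrict Ωs) {x | 0 < (T ((M v : X₀) + (v : X₀))) x} ∧
      0 < (volume.restrict Ωs) {x | (T ((M v : X₀) + (v : X₀))) x < 0} := by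
  intro v hv
  set w : X₀ := (M v : X₀) + (v : X₀) with hwdef
  set φ : X₀ := (φ₁ : X₀) with hφdef
  have hl1a : lam1 < α := lt_of_le_of_lt hlam1k hA
  have hl1b : lam1 < β := lt_of_lt_of_le hl1a hAB
  have hβ0 : 0 < β := by linarith
  -- T w ≠ 0
  have hw0 : T w ≠ 0 := by
    intro h0
    have hwz : w = 0 := hT (by rw [h0, map_zero])
    have hsum : (M v : X₀) + (v : X₀) = 0 := by rw [← hwdef]; exact hwz
    have hvV1 : (v : X₀) ∈ V₁ := by
      rw [eq_neg_of_add_eq_zero_right hsum]; exact neg_mem (M v).2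
    have : (v : X₀) ∈ V₁ ⊓ V₂ := ⟨hvV1, v.2⟩
    rw [hcompl.inf_eq_bot, Submodule.mem_bot] at this
    exact hv (Subtype.ext this)
  -- maximality along the φ direction
  have hMax : ∀ t : ℝ, Jfun T α β (w + t • φ) ≤ Jfun T α β w := by
    intro t
    have h := hM v (M v + t • φ₁)
    have harg : ((M v + t • φ₁ : V₁) : X₀) + (v : X₀) = w + t • φ := by
      push_cast; rw [hwdef, hφdef]; abel
    rwa [harg] at h
  have hd0 : (0:ℝ) ≤ ‖T φ‖ ^ 2 := by positivity
  have hXeq : ∀ t : ℝ, T (w + t • φ) = T w + t • T φ := by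
    intro t; rw [map_add, LinearMap.map_smul]
  have hXnorm : ∀ t : ℝ, ‖T w + t • T φ‖ ^ 2
      = ‖T w‖ ^ 2 + 2 * t * ⟪T φ, T w⟫ + t ^ 2 * ‖T φ‖ ^ 2 := by
    intro t
    have h1 : ⟪T w, t • T φ⟫ = t * ⟪T φ, T w⟫ := by
      rw [real_inner_smul_right, real_inner_comm]
    have h2 : ⟪t • T φ, t • T φ⟫ = t ^ 2 * ‖T φ‖ ^ 2 := by
      rw [real_inner_smul_left, real_inner_smul_right, real_inner_self_eq_norm_sq]; ring
    rw [← real_inner_self_eq_norm_sq, real_inner_add_add_self, h1, h2,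
      real_inner_self_eq_norm_sq]
    ring
  have hWexp : ∀ t : ℝ, ⟪w + t • φ, w + t • φ⟫
      = ⟪w, w⟫ + 2 * t * (lam1 * ⟪T φ, T w⟫) + t ^ 2 * (lam1 * ‖T φ‖ ^ 2) := by
    intro t
    have h1 : ⟪w, t • φ⟫ = t * (lam1 * ⟪T φ, T w⟫) := by
      rw [real_inner_smul_right, real_inner_comm, hφ₁eig w]
    have h2 : ⟪t • φ, t • φ⟫ = t ^ 2 * (lam1 * ‖T φ‖ ^ 2) := by
      rw [real_inner_smul_left, real_inner_smul_right, hφ₁eig φ,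
        real_inner_self_eq_norm_sq]
      ring
    rw [real_inner_add_add_self, h1, h2]; ring
  constructor
  · -- positive part: otherwise T w ≤ 0 a.e.
    by_contra h
    have h' : (volume.restrict Ωs) {x | 0 < (T w) x} = 0 := le_zero_iff.mp (not_lt.mp h)
    have hae : ∀ᵐ x ∂(volume.restrict Ωs), (T w) x ≤ 0 := by
      rw [ae_iff]; simpa [not_le] using h'
    have hc0 : ⟪T φ, T w⟫ ≤ 0 := by
      rw [inner_L2']
      apply integral_nonpos_of_ae
      filter_upwards [hφ₁pos, hae] with x h1 h2
      exact mul_nonpos_of_nonneg_of_nonpos h1.le h2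
    rcases eq_or_lt_of_le hc0 with hc | hc
    · -- inner product zero forces T w = 0
      apply hw0
      have hint : ∫ x, -((T φ) x * (T w) x) ∂(volume.restrict Ωs) = 0 := by
        rw [integral_neg, ← inner_L2', hc, neg_zero]
      have hnn : 0 ≤ᵐ[volume.restrict Ωs] fun x => -((T φ) x * (T w) x) := by
        filter_upwards [hφ₁pos, hae] with x h1 h2
        simp only [Pi.zero_apply, neg_nonneg]
        exact mul_nonpos_of_nonneg_of_nonpos h1.le h2
      have hzero := (integral_eq_zero_iff_of_nonneg_ae hnn
        (integrable_mul_L2 (T φ) (T w)).neg).mp hint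
      apply Lp.ext
      filter_upwards [hzero, hφ₁pos,
        Lp.coeFn_zero (E := ℝ) (p := 2) (μ := volume.restrict Ωs)] with x h1 h2 h3
      rw [h3]
      have h4 : (T φ) x * (T w) x = 0 := by
        have h1' : -((T φ) x * (T w) x) = 0 := h1
        linarith
      rcases mul_eq_zero.mp h4 with h5 | h5
      · exact absurd h5 (ne_of_gt h2)
      · simpa using h5
    · -- ⟪T φ, T w⟫ < 0 : perturb by t = ε > 0
      set ε : ℝ := -⟪T φ, T w⟫ / (‖T φ‖ ^ 2 + 1) with hεdef
      have hε : 0 < ε := div_pos (by linarith) (by positivity)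
      have hkey : ε * ‖T φ‖ ^ 2 < -⟪T φ, T w⟫ := by
        rw [hεdef, div_mul_eq_mul_div, div_lt_iff₀ (by positivity)]
        nlinarith
      have hJw : Jfun T α β w = (⟪w, w⟫ - β * ‖T w‖ ^ 2) / 2 := by
        simp only [Jfun]
        rw [posPart_eq_zero_of_nonpos _ hae, negPart_eq_neg_of_nonpos _ hae, norm_neg]
        simp
      have hm := hMax ε
      rw [hJw] at hm
      simp only [Jfun] at hm
      rw [hWexp ε, hXeq ε] at hm
      have hsplit : ‖Lp.posPart (T w + ε • T φ)‖ ^ 2 + ‖Lp.negPart (T w + ε • T φ)‖ ^ 2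
          = ‖T w‖ ^ 2 + 2 * ε * ⟪T φ, T w⟫ + ε ^ 2 * ‖T φ‖ ^ 2 := by
        rw [posPart_negPart_sq, hXnorm ε]
      have hPp : (0:ℝ) ≤ ‖Lp.posPart (T w + ε • T φ)‖ ^ 2 := by positivity
      have hNp : (0:ℝ) ≤ ‖Lp.negPart (T w + ε • T φ)‖ ^ 2 := by positivity
      have h5 : 0 < -(2 * ⟪T φ, T w⟫ + ε * ‖T φ‖ ^ 2) := by linarith
      have h6 : α * ‖Lp.posPart (T w + ε • T φ)‖ ^ 2 + β * ‖Lp.negPart (T w + ε • T φ)‖ ^ 2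
          ≤ β * (‖Lp.posPart (T w + ε • T φ)‖ ^ 2 + ‖Lp.negPart (T w + ε • T φ)‖ ^ 2) := by
        nlinarith [mul_nonneg (sub_nonneg.mpr hAB) hPp]
      have h7 : β * (‖Lp.posPart (T w + ε • T φ)‖ ^ 2 + ‖Lp.negPart (T w + ε • T φ)‖ ^ 2)
          = β * (‖T w‖ ^ 2 + 2 * ε * ⟪T φ, T w⟫ + ε ^ 2 * ‖T φ‖ ^ 2) := by rw [hsplit]
      nlinarith [mul_pos hε (mul_pos (sub_pos.mpr hl1b) h5), hm, h6, h7]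
  · -- negative part: otherwise 0 ≤ T w a.e.
    by_contra h
    have h' : (volume.restrict Ωs) {x | (T w) x < 0} = 0 := le_zero_iff.mp (not_lt.mp h)
    have hae : ∀ᵐ x ∂(volume.restrict Ωs), 0 ≤ (T w) x := by
      rw [ae_iff]; simpa [not_lt] using h'
    have hc0 : 0 ≤ ⟪T φ, T w⟫ := by
      rw [inner_L2']
      apply integral_nonneg_of_ae
      filter_upwards [hφ₁pos, hae] with x h1 h2
      exact mul_nonneg h1.le h2
    rcases eq_or_lt_of_le hc0 with hc | hc
    · apply hw0
      have hint : ∫ x, (T φ) x * (T w) x ∂(volume.restrict Ωs) = 0 := by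
        rw [← inner_L2', ← hc]
      have hnn : 0 ≤ᵐ[volume.restrict Ωs] fun x => (T φ) x * (T w) x := by
        filter_upwards [hφ₁pos, hae] with x h1 h2
        exact mul_nonneg h1.le h2
      have hzero := (integral_eq_zero_iff_of_nonneg_ae hnn
        (integrable_mul_L2 (T φ) (T w))).mp hint
      apply Lp.ext
      filter_upwards [hzero, hφ₁pos,
        Lp.coeFn_zero (E := ℝ) (p := 2) (μ := volume.restrict Ωs)] with x h1 h2 h3
      rw [h3]
      rcases mul_eq_zero.mp h1 with h5 | h5
      · exact absurd h5 (ne_of_gt h2)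
      · simpa using h5
    · -- 0 < ⟪T φ, T w⟫ : perturb by t = -ε
      set ε : ℝ := (α - lam1) * ⟪T φ, T w⟫ / ((β - lam1) * ‖T φ‖ ^ 2 + 1) with hεdef
      have hden : (0:ℝ) < (β - lam1) * ‖T φ‖ ^ 2 + 1 := by nlinarith
      have hε : 0 < ε := div_pos (by nlinarith) hden
      have hkey : ε * ((β - lam1) * ‖T φ‖ ^ 2) < 2 * ((α - lam1) * ⟪T φ, T w⟫) := by
        rw [hεdef, div_mul_eq_mul_div, div_lt_iff₀ hden]
        have hN : 0 < (α - lam1) * ⟪T φ, T w⟫ := mul_pos (by linarith) hc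
        have hD : (0:ℝ) ≤ (β - lam1) * ‖T φ‖ ^ 2 := mul_nonneg (by linarith) hd0
        nlinarith [hN, hD, mul_nonneg hN.le hD]
      have hJw : Jfun T α β w = (⟪w, w⟫ - α * ‖T w‖ ^ 2) / 2 := by
        simp only [Jfun]
        rw [posPart_eq_of_nonneg _ hae, negPart_eq_zero_of_nonneg _ hae]
        simp
      have hm := hMax (-ε)
      rw [hJw] at hm
      simp only [Jfun] at hm
      rw [hWexp (-ε), hXeq (-ε)] at hm
      have hsplit : ‖Lp.posPart (T w + (-ε) • T φ)‖ ^ 2 + ‖Lp.negPart (T w + (-ε) • T φ)‖ ^ 2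
          = ‖T w‖ ^ 2 + 2 * (-ε) * ⟪T φ, T w⟫ + (-ε) ^ 2 * ‖T φ‖ ^ 2 := by
        rw [posPart_negPart_sq, hXnorm (-ε)]
      have hNle : ‖Lp.negPart (T w + (-ε) • T φ)‖ ^ 2 ≤ ε ^ 2 * ‖T φ‖ ^ 2 := by
        have hb : ∀ᵐ x ∂(volume.restrict Ωs), -((ε • T φ) x) ≤ (T w + (-ε) • T φ) x := by
          filter_upwards [Lp.coeFn_add (T w) ((-ε) • T φ), Lp.coeFn_smul (-ε : ℝ) (T φ),
            Lp.coeFn_smul (ε : ℝ) (T φ), hae] with x h1 h2 h3 h4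
          rw [h1, h3]
          simp only [Pi.add_apply, Pi.smul_apply, smul_eq_mul]
          rw [h2]
          simp only [Pi.smul_apply, smul_eq_mul]
          linarith
        calc ‖Lp.negPart (T w + (-ε) • T φ)‖ ^ 2 ≤ ‖ε • T φ‖ ^ 2 := negPart_sq_le _ _ hb
          _ = ε ^ 2 * ‖T φ‖ ^ 2 := by
            rw [norm_smul, mul_pow, Real.norm_eq_abs, sq_abs]
      have hPp : (0:ℝ) ≤ ‖Lp.posPart (T w + (-ε) • T φ)‖ ^ 2 := by positivity
      have h6 : α * ‖Lp.posPart (T w + (-ε) • T φ)‖ ^ 2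
            + β * ‖Lp.negPart (T w + (-ε) • T φ)‖ ^ 2
          ≤ α * (‖Lp.posPart (T w + (-ε) • T φ)‖ ^ 2 + ‖Lp.negPart (T w + (-ε) • T φ)‖ ^ 2)
            + (β - α) * (ε ^ 2 * ‖T φ‖ ^ 2) := by
        nlinarith [mul_le_mul_of_nonneg_left hNle (sub_nonneg.mpr hAB)]
      have h7 : α * (‖Lp.posPart (T w + (-ε) • T φ)‖ ^ 2 + ‖Lp.negPart (T w + (-ε) • T φ)‖ ^ 2)
          = α * (‖T w‖ ^ 2 + 2 * (-ε) * ⟪T φ, T w⟫ + (-ε) ^ 2 * ‖T φ‖ ^ 2) := by rw [hsplit]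
      nlinarith [mul_lt_mul_of_pos_left hkey hε, hm, h6, h7]
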